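/- Let c₀, c₁ > 0 and let F : ℝ → ℝ be differentiable on (0,∞) with |1 − F(t)| ≤ c₀/t² and |F′(t)| ≤ c₁/t² for all t > 0. Define G_F(u) = Σ_{ℓ≥0} (1 − F(2^ℓ u))/2^ℓ. Then for every u ≥ T > 0, |d/du (G_F(u)/u)| ≤ 8c₀/(7T⁴) + 4c₁/(3T³). -/

import Mathlib

open Real

theorem deriv_GF_div_bound (c₀ c₁ : ℝ) (hc₀ : 0 < c₀) (hc₁ : 0 < c₁)
    (F : ℝ → ℝ)
    (hdiff : ∀ t : ℝ, 0 < t → DifferentiableAt ℝ F t)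
    (h0 : ∀ t : ℝ, 0 < t → |1 - F t| ≤ c₀ / t ^ 2)
    (h1 : ∀ t : ℝ, 0 < t → |deriv F t| ≤ c₁ / t ^ 2) :
    ∀ T u : ℝ, 0 < T → T ≤ u →
      |deriv (fun x : ℝ => (∑' ℓ : ℕ, (1 - F (2 ^ ℓ * x)) / 2 ^ ℓ) / x) u|
        ≤ 8 * c₀ / (7 * T ^ 4) + 4 * c₁ / (3 * T ^ 3) := by
  intro T u hT hTu
  have hu : (0:ℝ) < u := lt_of_lt_of_le hT hTu
  have hT2 : (0:ℝ) < T / 2 := by linarith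
  set g : ℕ → ℝ → ℝ := fun n x => (1 - F (2 ^ n * x)) / 2 ^ n with hg
  set g' : ℕ → ℝ → ℝ := fun n x => -deriv F (2 ^ n * x) with hg'
  have h2n : ∀ n : ℕ, (0:ℝ) < 2 ^ n := fun n => by positivity
  have h4n : ∀ n : ℕ, ((2:ℝ) ^ n) ^ 2 = (4:ℝ) ^ n := by
    intro n; rw [← pow_mul, mul_comm, pow_mul]; norm_num
  have h8n : ∀ n : ℕ, ((2:ℝ) ^ n) ^ 2 * 2 ^ n = (8:ℝ) ^ n := by
    intro n
    rw [← pow_mul, ← pow_add, show n * 2 + n = 3 * n from by ring, pow_mul]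
    norm_num
  have hpos : ∀ (n : ℕ) (x : ℝ), x ∈ Set.Ioi (T/2) → (0:ℝ) < 2 ^ n * x := by
    intro n x hx
    have : (0:ℝ) < x := lt_trans hT2 hx
    positivity
  -- derivative of each term
  have hder : ∀ (n : ℕ) (x : ℝ), x ∈ Set.Ioi (T/2) → HasDerivAt (g n) (g' n x) x := by
    intro n x hx
    have h1' : HasDerivAt F (deriv F (2 ^ n * x)) (2 ^ n * x) :=
      (hdiff _ (hpos n x hx)).hasDerivAt
    have h2 : HasDerivAt (fun y : ℝ => 2 ^ n * y) (2 ^ n) x := by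
      simpa using (hasDerivAt_id x).const_mul (2 ^ n : ℝ)
    have h3 : HasDerivAt (fun y : ℝ => F (2 ^ n * y))
        (deriv F (2 ^ n * x) * 2 ^ n) x := h1'.comp x h2
    have h4 := ((hasDerivAt_const x (1:ℝ)).sub h3).div_const (2 ^ n : ℝ)
    have e : (0 - deriv F (2 ^ n * x) * 2 ^ n) / 2 ^ n = g' n x := by
      rw [hg']; field_simp; ring
    exact e ▸ h4
  -- bound on derivatives over Ioi (T/2)
  have hbound : ∀ (n : ℕ) (x : ℝ), x ∈ Set.Ioi (T/2) →
      ‖g' n x‖ ≤ 4 * c₁ / T ^ 2 * (1/4 : ℝ) ^ n := by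
    intro n x hx
    have hx' : T / 2 < x := hx
    have hFb := h1 _ (hpos n x hx)
    have hle : (2:ℝ) ^ n * (T/2) ≤ 2 ^ n * x :=
      mul_le_mul_of_nonneg_left hx'.le (h2n n).le
    have hsq : ((2:ℝ) ^ n * (T/2)) ^ 2 ≤ (2 ^ n * x) ^ 2 :=
      pow_le_pow_left₀ (by positivity) hle 2
    have key : c₁ / (2 ^ n * x) ^ 2 ≤ c₁ / ((2:ℝ) ^ n * (T/2)) ^ 2 :=
      div_le_div_of_nonneg_left hc₁.le (by positivity) hsq
    have heq : c₁ / ((2:ℝ) ^ n * (T/2)) ^ 2 = 4 * c₁ / T ^ 2 * (1/4 : ℝ) ^ n := by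
      rw [show ((1/4:ℝ))^n = 1 / 4^n from by rw [div_pow, one_pow], mul_pow, h4n,
        div_mul_div_comm, mul_one]
      rw [div_eq_div_iff (by positivity) (by positivity)]
      ring
    calc ‖g' n x‖ = |deriv F (2 ^ n * x)| := by simp [hg']
      _ ≤ c₁ / (2 ^ n * x) ^ 2 := hFb
      _ ≤ 4 * c₁ / T ^ 2 * (1/4 : ℝ) ^ n := heq ▸ key
  have hsum4 : Summable (fun n : ℕ => 4 * c₁ / T ^ 2 * (1/4 : ℝ) ^ n) :=
    (summable_geometric_of_lt_one (by norm_num) (by norm_num)).mul_left _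
  -- pointwise bound on g' at u
  have hgu' : ∀ n : ℕ, |g' n u| ≤ c₁ / u ^ 2 * (1/4 : ℝ) ^ n := by
    intro n
    have hpu : (0:ℝ) < 2 ^ n * u := by positivity
    have hFb := h1 _ hpu
    have heq : c₁ / ((2:ℝ) ^ n * u) ^ 2 = c₁ / u ^ 2 * (1/4 : ℝ) ^ n := by
      rw [show ((1/4:ℝ))^n = 1 / 4^n from by rw [div_pow, one_pow], mul_pow, h4n,
        div_mul_div_comm, mul_one]
      rw [div_eq_div_iff (by positivity) (by positivity)]
      ring
    calc |g' n u| = |deriv F (2 ^ n * u)| := by simp [hg']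
      _ ≤ c₁ / (2 ^ n * u) ^ 2 := hFb
      _ = c₁ / u ^ 2 * (1/4 : ℝ) ^ n := heq
  -- pointwise bound on g at u
  have hgu_bound : ∀ n : ℕ, |g n u| ≤ c₀ / u ^ 2 * (1/8 : ℝ) ^ n := by
    intro n
    have hpu : (0:ℝ) < 2 ^ n * u := by positivity
    have hFb := h0 _ hpu
    have hkey : ((2:ℝ) ^ n * u) ^ 2 * 2 ^ n = u ^ 2 * 8 ^ n := by
      rw [mul_pow, mul_right_comm, h8n, mul_comm]
    calc |g n u| = |1 - F (2 ^ n * u)| / 2 ^ n := by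
          rw [hg]; simp [abs_div, abs_of_pos (h2n n)]
      _ ≤ (c₀ / (2 ^ n * u) ^ 2) / 2 ^ n :=
          div_le_div_of_nonneg_right hFb (h2n n).le
      _ = c₀ / u ^ 2 * (1/8 : ℝ) ^ n := by
          rw [div_div, hkey, show ((1/8:ℝ))^n = 1 / 8^n from by rw [div_pow, one_pow],
            div_mul_div_comm, mul_one]
  have hgu_summable : Summable (fun n : ℕ => g n u) := by
    apply Summable.of_norm_bounded
      ((summable_geometric_of_lt_one (show (0:ℝ) ≤ 1/8 by norm_num)
        (show (1/8:ℝ) < 1 by norm_num)).mul_left (c₀ / u ^ 2))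
    intro n; exact hgu_bound n
  have huIoi : u ∈ Set.Ioi (T/2) := by simp only [Set.mem_Ioi]; linarith
  -- derivative of the tsum
  have hG : HasDerivAt (fun z => ∑' n : ℕ, g n z) (∑' n : ℕ, g' n u) u :=
    hasDerivAt_tsum_of_isPreconnected hsum4 isOpen_Ioi (isPreconnected_Ioi)
      hder hbound huIoi hgu_summable huIoi
  -- derivative of the quotient
  have hQ : HasDerivAt (fun x : ℝ => (∑' ℓ : ℕ, (1 - F (2 ^ ℓ * x)) / 2 ^ ℓ) / x)
      (((∑' n : ℕ, g' n u) * u - (∑' n : ℕ, g n u) * 1) / u ^ 2) u :=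
    hG.div (hasDerivAt_id u) (ne_of_gt hu)
  rw [hQ.deriv]
  set A := ∑' n : ℕ, g' n u with hA
  set B := ∑' n : ℕ, g n u with hB
  -- bounds on the tsums
  have hsA : HasSum (fun n : ℕ => c₁ / u ^ 2 * (1/4 : ℝ) ^ n) (c₁ / u ^ 2 * (4/3)) := by
    have := (hasSum_geometric_of_lt_one (show (0:ℝ) ≤ 1/4 by norm_num)
      (show (1/4:ℝ) < 1 by norm_num)).mul_left (c₁ / u ^ 2)
    rw [show (4/3:ℝ) = (1 - 1/4)⁻¹ by norm_num]; exact this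
  have hsB : HasSum (fun n : ℕ => c₀ / u ^ 2 * (1/8 : ℝ) ^ n) (c₀ / u ^ 2 * (8/7)) := by
    have := (hasSum_geometric_of_lt_one (show (0:ℝ) ≤ 1/8 by norm_num)
      (show (1/8:ℝ) < 1 by norm_num)).mul_left (c₀ / u ^ 2)
    rw [show (8/7:ℝ) = (1 - 1/8)⁻¹ by norm_num]; exact this
  have hbA : |A| ≤ c₁ / u ^ 2 * (4/3) := by
    rw [hA, ← Real.norm_eq_abs]
    exact tsum_of_norm_bounded hsA fun n => by rw [Real.norm_eq_abs]; exact hgu' n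
  have hbB : |B| ≤ c₀ / u ^ 2 * (8/7) := by
    rw [hB, ← Real.norm_eq_abs]
    exact tsum_of_norm_bounded hsB fun n => by rw [Real.norm_eq_abs]; exact hgu_bound n
  have hu2 : (0:ℝ) < u ^ 2 := by positivity
  calc |(A * u - B * 1) / u ^ 2|
      = |A * u - B| / u ^ 2 := by rw [abs_div, abs_of_pos hu2, mul_one]
    _ ≤ (|A| * u + |B|) / u ^ 2 := by
        apply div_le_div_of_nonneg_right _ hu2.le
        calc |A * u - B| ≤ |A * u| + |B| := abs_sub _ _
          _ = |A| * u + |B| := by rw [abs_mul, abs_of_pos hu]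
    _ ≤ ((c₁ / u ^ 2 * (4/3)) * u + c₀ / u ^ 2 * (8/7)) / u ^ 2 := by
        apply div_le_div_of_nonneg_right _ hu2.le
        have := mul_le_mul_of_nonneg_right hbA hu.le
        linarith
    _ = 8 * c₀ / (7 * u ^ 4) + 4 * c₁ / (3 * u ^ 3) := by
        field_simp
        ring
    _ ≤ 8 * c₀ / (7 * T ^ 4) + 4 * c₁ / (3 * T ^ 3) := by
        gcongr <;> first | positivity | exact hTu | exact hc₀.le | exact hc₁.le
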